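/- Let G be a cactus on n vertices and let C = v_1v_2...v_av_1 be a cycle of G of odd length a. Let B_1,...,B_a be the components of G - E(C) with v_i ∈ B_i. Then for any edge v_l v_{l+1} of C, PI(v_l v_{l+1}) = n - 2 - |B_t|, where v_t is the unique vertex of C equidistant from v_l and v_{l+1}. -/

import Mathlib

open SimpleGraph Finset
open scoped Classical

variable {V : Type*}

/-- Number of vertices strictly closer to `x` than to `y` (excluding `x` and `y`). -/
noncomputable def nclose (G : SimpleGraph V) (x y : V) : ℕ :=
  Nat.card {w : V | w ≠ x ∧ w ≠ y ∧ G.dist w x < G.dist w y}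

/-- The contribution `PI(e) = n_{xy}(x) + n_{xy}(y)` of an edge. -/
noncomputable def PIedge (G : SimpleGraph V) : Sym2 V → ℕ :=
  Sym2.lift ⟨fun x y => nclose G x y + nclose G y x, fun _ _ => add_comm _ _⟩

/-- The vertex PI index of a graph. -/
noncomputable def PI [Fintype V] (G : SimpleGraph V) : ℕ :=
  ∑ e ∈ G.edgeFinset, PIedge G e

/-- A cactus: connected, and any two cycles share at most one vertex. -/
def IsCactus (G : SimpleGraph V) : Prop :=
  G.Connected ∧ ∀ (u v : V) (c₁ : G.Walk u u) (c₂ : G.Walk v v),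
    c₁.IsCycle → c₂.IsCycle → {e | e ∈ c₁.edges} ≠ {e | e ∈ c₂.edges} →
    Set.ncard {x | x ∈ c₁.support ∧ x ∈ c₂.support} ≤ 1

namespace SimpleGraph.Walk


private lemma support_eq_map_getVert {G : SimpleGraph V} {u v : V} (p : G.Walk u v) :
    p.support = (List.range (p.length + 1)).map p.getVert := by
  induction p with
  | nil => simp [getVert]
  | cons h q ih =>
    have hfun : (cons h q).getVert ∘ Nat.succ = q.getVert := by
      funext x; simp [Nat.succ_eq_add_one, getVert_cons_succ]
    rw [length_cons]
    conv_rhs => rw [List.range_succ_eq_map, List.map_cons, List.map_map, hfun, getVert_zero]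
    rw [support_cons, ih]

private lemma exists_getVert_of_mem_edges {G : SimpleGraph V} {u v : V} (p : G.Walk u v)
    {e : Sym2 V} (he : e ∈ p.edges) :
    ∃ i, i < p.length ∧ e = s(p.getVert i, p.getVert (i + 1)) := by
  induction p with
  | nil => simp at he
  | cons h q ih =>
    rw [edges_cons, List.mem_cons] at he
    rcases he with he | he
    · exact ⟨0, by simp, by simpa [getVert_cons_succ] using he⟩
    · obtain ⟨i, hi, hei⟩ := ih he
      exact ⟨i + 1, by simpa using Nat.succ_lt_succ hi, by simpa [getVert_cons_succ] using hei⟩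

end SimpleGraph.Walk

namespace SimpleGraph.Walk

private lemma cycle_tail_eq {G : SimpleGraph V} {v : V} (c : G.Walk v v) :
    c.support.tail = (List.range c.length).map (fun k => c.getVert (k + 1)) := by
  rw [support_eq_map_getVert, List.range_succ_eq_map, List.map_cons, List.tail_cons,
    List.map_map]
  rfl

private lemma IsCycle.getVert_inj {G : SimpleGraph V} {v : V} {c : G.Walk v v}
    (hc : c.IsCycle) {i j : ℕ} (hi : i < c.length) (hj : j < c.length)
    (hij : c.getVert i = c.getVert j) : i = j := by
  have hnd : c.support.tail.Nodup := hc.support_nodup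
  rw [cycle_tail_eq] at hnd
  have key : ∀ i j, i < c.length → j < c.length →
      c.getVert (i + 1) = c.getVert (j + 1) → i = j := by
    intro i j hi hj hij
    exact List.inj_on_of_nodup_map hnd (List.mem_range.2 hi) (List.mem_range.2 hj) hij
  have hlen : 0 < c.length := by
    have := hc.three_le_length; omega
  rcases Nat.eq_zero_or_pos i with hi0 | hi0
  · rcases Nat.eq_zero_or_pos j with hj0 | hj0
    · omega
    · subst hi0
      have h0 : c.getVert ((c.length - 1) + 1) = c.getVert j := by
        have : (c.length - 1) + 1 = c.length := by omega
        rw [this, getVert_length, ← hij, getVert_zero]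
      have := key (c.length - 1) (j - 1) (by omega) (by omega)
        (by rw [h0]; congr 1; omega)
      omega
  · rcases Nat.eq_zero_or_pos j with hj0 | hj0
    · subst hj0
      have h0 : c.getVert ((c.length - 1) + 1) = c.getVert i := by
        have : (c.length - 1) + 1 = c.length := by omega
        rw [this, getVert_length, hij, getVert_zero]
      have := key (c.length - 1) (i - 1) (by omega) (by omega)
        (by rw [h0]; congr 1; omega)
      omega
    · have := key (i - 1) (j - 1) (by omega) (by omega)
        (by rw [show i - 1 + 1 = i by omega, show j - 1 + 1 = j by omega, hij])
      omega

end SimpleGraph.Walk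
namespace SimpleGraph.Walk

private lemma end_mem_tail_support' {G : SimpleGraph V} {v : V} (c : G.Walk v v)
    (hlen : 0 < c.length) : v ∈ c.support.tail := by
  rw [cycle_tail_eq]
  refine List.mem_map.2 ⟨c.length - 1, List.mem_range.2 (by omega), ?_⟩
  rw [show c.length - 1 + 1 = c.length by omega, getVert_length]

private lemma mem_support_rotate_iff' {G : SimpleGraph V} {v x z : V} (c : G.Walk v v)
    (hlen : 0 < c.length) (hx : x ∈ c.support) :
    z ∈ (c.rotate x hx).support ↔ z ∈ c.support := by
  have hrlen : 0 < (c.rotate x hx).length := by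
    have : (c.rotate x hx).length = c.length := by
      rw [rotate, length_append, Nat.add_comm, ← length_append, take_spec]
    omega
  have htails := (support_rotate c x hx).mem_iff (a := z)
  constructor
  · intro hz
    rw [support_eq_cons] at hz
    rcases List.mem_cons.mp hz with hz | hz
    · exact hz ▸ hx
    · exact List.mem_of_mem_tail (htails.1 hz)
  · intro hz
    rw [support_eq_cons] at hz
    rcases List.mem_cons.mp hz with hz | hz
    · have : z ∈ c.support.tail := hz ▸ end_mem_tail_support' c hlen
      exact List.mem_of_mem_tail (htails.2 this)
    · exact List.mem_of_mem_tail (htails.2 hz)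

private lemma mem_edges_rotate_iff {G : SimpleGraph V} {v x : V} (c : G.Walk v v)
    (hx : x ∈ c.support) {e : Sym2 V} :
    e ∈ (c.rotate x hx).edges ↔ e ∈ c.edges := (rotate_edges c x hx).mem_iff

end SimpleGraph.Walk

namespace SimpleGraph

private lemma cactus_sep_aux [Fintype V] {G : SimpleGraph V} (hG : IsCactus G)
    {v : V} {c : G.Walk v v} (hc : c.IsCycle) :
    ∀ (m : ℕ) (x y : V) (q : (G.deleteEdges {e | e ∈ c.edges}).Walk x y),
      q.length ≤ m → q.IsPath → x ∈ c.support → y ∈ c.support → x ≠ y → False := by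
  intro m
  induction m with
  | zero =>
    intro x y q hlen _ _ _ hxy
    exact hxy (Walk.eq_of_length_eq_zero (Nat.le_zero.mp hlen))
  | succ m ih =>
    intro x y q hlen hq hx hy hxy
    by_cases hmid : ∃ z ∈ q.support, z ∈ c.support ∧ z ≠ x ∧ z ≠ y
    · obtain ⟨z, hzq, hzc, hzx, hzy⟩ := hmid
      have hdrop : 0 < (q.dropUntil z hzq).length := by
        rcases Nat.eq_zero_or_pos (q.dropUntil z hzq).length with h0 | h0
        · exact absurd (Walk.eq_of_length_eq_zero h0) hzy
        · exact h0
      have hsum : (q.takeUntil z hzq).length + (q.dropUntil z hzq).length = q.length := by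
        rw [← Walk.length_append, Walk.take_spec]
      exact ih x z (q.takeUntil z hzq) (by omega) (hq.takeUntil _) hx hzc (Ne.symm hzx)
    · push_neg at hmid
      have hql : 0 < q.length := by
        rcases Nat.eq_zero_or_pos q.length with h0 | h0
        · exact absurd (Walk.eq_of_length_eq_zero h0) hxy
        · exact h0
      have hqE : ∀ e ∈ q.edges, e ∈ G.edgeSet := by
        intro e heq
        have := q.edges_subset_edgeSet heq
        rw [edgeSet_deleteEdges] at this
        exact this.1
      have hqnotc : ∀ e ∈ q.edges, e ∉ c.edges := by
        intro e heq
        have := q.edges_subset_edgeSet heq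
        rw [edgeSet_deleteEdges] at this
        exact this.2
      set Q : G.Walk x y := q.transfer G hqE with hQdef
      have hQsup : Q.support = q.support := Walk.support_transfer _ _
      have hQedges : Q.edges = q.edges := Walk.edges_transfer _ _
      set r : G.Walk x x := c.rotate x hx with hrdef
      have hrc : r.IsCycle := hc.rotate hx
      have hclen : 0 < c.length := by have := hc.three_le_length; omega
      have hrsup : ∀ z, z ∈ r.support ↔ z ∈ c.support :=
        fun z => Walk.mem_support_rotate_iff' c hclen hx
      have hredges : ∀ e, e ∈ r.edges ↔ e ∈ c.edges :=
        fun e => Walk.mem_edges_rotate_iff c hx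
      have hyr : y ∈ r.support := (hrsup y).2 hy
      set A1 := r.takeUntil y hyr with hA1def
      set A2 := r.dropUntil y hyr with hA2def
      have hspec : A1.append A2 = r := Walk.take_spec r hyr
      have htail : r.support.tail = A1.support.tail ++ A2.support.tail := by
        conv_lhs => rw [← hspec, Walk.support_append, Walk.support_eq_cons A1]
        simp [List.cons_append]
      have hndr : r.support.tail.Nodup := hrc.support_nodup
      rw [htail, List.nodup_append] at hndr
      obtain ⟨hndA1, hndA2, hdisj⟩ := hndr
      have hyA1 : y ∈ A1.support.tail := by
        have h1 : y ∈ A1.support := Walk.end_mem_support A1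
        rw [Walk.support_eq_cons A1] at h1
        rcases List.mem_cons.mp h1 with h1 | h1
        · exact absurd h1.symm hxy
        · exact h1
      have hyA2 : y ∉ A2.support.tail := fun h => hdisj y hyA1 y h rfl
      have hA2edges : ∀ e ∈ A2.edges, e ∈ c.edges :=
        fun e hA => (hredges e).1 (Walk.edges_dropUntil_subset r hyr hA)
      have hA2supS : ∀ z ∈ A2.support, z ∈ c.support :=
        fun z hz => (hrsup z).1 (Walk.support_dropUntil_subset r hyr hz)
      set w : G.Walk x x := Q.append A2 with hwdef
      have hwsup : w.support = Q.support ++ A2.support.tail := Walk.support_append Q A2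
      have hwtail : w.support.tail = Q.support.tail ++ A2.support.tail := by
        conv_lhs => rw [hwsup, Walk.support_eq_cons Q]
        simp [List.cons_append]
      have hwedges : w.edges = Q.edges ++ A2.edges := Walk.edges_append Q A2
      -- edges nodup
      have hQed : Q.edges.Nodup := by rw [hQedges]; exact hq.isTrail.edges_nodup
      have hA2ed : A2.edges.Nodup := (hrc.isTrail.dropUntil hyr).edges_nodup
      have hedisj : Q.edges.Disjoint A2.edges := by
        intro e he1 he2
        rw [hQedges] at he1
        exact hqnotc e he1 (hA2edges e he2)
      -- support tail nodup
      have hQsupnd : Q.support.Nodup := by rw [hQsup]; exact hq.support_nodup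
      have hxQtail : x ∉ Q.support.tail := by
        have := hQsupnd
        rw [Walk.support_eq_cons Q] at this
        exact (List.nodup_cons.mp this).1
      have hsdisj : Q.support.tail.Disjoint A2.support.tail := by
        intro z hz1 hz2
        have hzq : z ∈ q.support := by
          rw [← hQsup]; exact List.mem_of_mem_tail hz1
        have hzc : z ∈ c.support := hA2supS z (List.mem_of_mem_tail hz2)
        by_cases hzx : z = x
        · exact hxQtail (hzx ▸ hz1)
        · exact hyA2 (hmid z hzq hzc hzx ▸ hz2)
      have hwcy : w.IsCycle := by
        refine ⟨⟨⟨?_⟩, ?_⟩, ?_⟩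
        · rw [hwedges]
          exact List.Nodup.append hQed hA2ed hedisj
        · intro hnil
          have : w.length = 0 := by rw [hnil]; rfl
          rw [hwdef, Walk.length_append, Walk.length_transfer] at this
          omega
        · rw [hwtail]
          exact List.Nodup.append (hQsupnd.tail) hndA2 hsdisj
      -- edge sets differ
      obtain ⟨e₀, he₀⟩ := List.exists_mem_of_length_pos (by rw [Walk.length_edges]; exact hql)
      have he₀w : e₀ ∈ w.edges := by
        rw [hwedges]
        exact List.mem_append_left _ (hQedges ▸ he₀)
      have he₀c : e₀ ∉ c.edges := hqnotc e₀ he₀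
      have hne : {e | e ∈ c.edges} ≠ {e | e ∈ w.edges} := by
        intro hset
        exact he₀c (hset ▸ he₀w : e₀ ∈ {e | e ∈ c.edges})
      have hcard := hG.2 v x c w hc hwcy hne
      have hsub : ({x, y} : Set V) ⊆ {z | z ∈ c.support ∧ z ∈ w.support} := by
        intro z hz
        rcases hz with hz | hz
        · subst hz; exact ⟨hx, Walk.start_mem_support w⟩
        · simp only [Set.mem_singleton_iff] at hz
          subst hz
          refine ⟨hy, ?_⟩
          rw [hwsup]
          exact List.mem_append_left _ (Walk.end_mem_support Q)
      have h2 : (2 : ℕ) ≤ Set.ncard {z | z ∈ c.support ∧ z ∈ w.support} := by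
        rw [← Set.ncard_pair hxy]
        exact Set.ncard_le_ncard hsub (Set.toFinite _)
      omega

end SimpleGraph

namespace SimpleGraph

private lemma cactus_sep [Fintype V] {G : SimpleGraph V} (hG : IsCactus G)
    {v : V} {c : G.Walk v v} (hc : c.IsCycle) {x y : V}
    (hx : x ∈ c.support) (hy : y ∈ c.support) (hxy : x ≠ y)
    (hr : (G.deleteEdges {e | e ∈ c.edges}).Reachable x y) : False := by
  obtain ⟨q⟩ := hr
  exact cactus_sep_aux hG hc q.bypass.length x y q.bypass le_rfl q.bypass_isPath hx hy hxy

private lemma exists_rep [Fintype V] {G : SimpleGraph V} (hG : IsCactus G)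
    {v : V} (c : G.Walk v v) (hc : c.IsCycle) (w : V) :
    ∃ i, i < c.length ∧ (G.deleteEdges {e | e ∈ c.edges}).Reachable w (c.getVert i) := by
  have hclen : 0 < c.length := by have := hc.three_le_length; omega
  obtain ⟨p⟩ := hG.1 w v
  have key : ∀ {x w' : V} (p : G.Walk w' x), x ∈ c.support →
      ∃ u ∈ c.support, (G.deleteEdges {e | e ∈ c.edges}).Reachable w' u := by
    intro x w' p
    induction p with
    | nil => exact fun hx => ⟨_, hx, Reachable.refl _⟩
    | @cons w₁ w₂ _ h q ih =>
      intro hx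
      obtain ⟨u, hu, hru⟩ := ih hx
      by_cases hec : s(w₁, w₂) ∈ c.edges
      · exact ⟨w₁, c.fst_mem_support_of_mem_edges hec, Reachable.refl _⟩
      · have hadj : (G.deleteEdges {e | e ∈ c.edges}).Adj w₁ w₂ :=
          (deleteEdges_adj).mpr ⟨h, hec⟩
        exact ⟨u, hu, hadj.reachable.trans hru⟩
  obtain ⟨u, hu, hru⟩ := key p (Walk.start_mem_support c)
  obtain ⟨i, hgv, hile⟩ := Walk.mem_support_iff_exists_getVert.mp hu
  rcases Nat.lt_or_ge i c.length with hi | hi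
  · exact ⟨i, hi, hgv ▸ hru⟩
  · have : c.getVert i = c.getVert 0 := by
      rw [Walk.getVert_zero, Walk.getVert_of_length_le c hi]
    exact ⟨0, hclen, by rw [← this, hgv]; exact hru⟩

private noncomputable def repIdx (G : SimpleGraph V) {v : V} (c : G.Walk v v) (w : V) : ℕ :=
  if h : ∃ i, i < c.length ∧ (G.deleteEdges {e | e ∈ c.edges}).Reachable w (c.getVert i)
  then h.choose else 0

private lemma repIdx_spec [Fintype V] {G : SimpleGraph V} (hG : IsCactus G)
    {v : V} (c : G.Walk v v) (hc : c.IsCycle) (w : V) :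
    repIdx G c w < c.length ∧
      (G.deleteEdges {e | e ∈ c.edges}).Reachable w (c.getVert (repIdx G c w)) := by
  have h := exists_rep hG c hc w
  rw [repIdx, dif_pos h]
  exact ⟨h.choose_spec.1, h.choose_spec.2⟩

private lemma repIdx_eq [Fintype V] {G : SimpleGraph V} (hG : IsCactus G)
    {v : V} (c : G.Walk v v) (hc : c.IsCycle) {w : V} {i : ℕ} (hi : i < c.length)
    (hr : (G.deleteEdges {e | e ∈ c.edges}).Reachable w (c.getVert i)) :
    repIdx G c w = i := by
  obtain ⟨hlt, hre⟩ := repIdx_spec hG c hc w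
  by_contra hne
  have hgne : c.getVert (repIdx G c w) ≠ c.getVert i :=
    fun h => hne (hc.getVert_inj hlt hi h)
  exact cactus_sep hG hc
    (Walk.mem_support_iff_exists_getVert.mpr ⟨repIdx G c w, rfl, hlt.le⟩)
    (Walk.mem_support_iff_exists_getVert.mpr ⟨i, rfl, hi.le⟩)
    hgne (hre.symm.trans hr)

private lemma repIdx_getVert [Fintype V] {G : SimpleGraph V} (hG : IsCactus G)
    {v : V} (c : G.Walk v v) (hc : c.IsCycle) {i : ℕ} (hi : i < c.length) :
    repIdx G c (c.getVert i) = i :=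
  repIdx_eq hG c hc hi (Reachable.refl _)

end SimpleGraph

namespace SimpleGraph

private lemma cast_repIdx_getVert [Fintype V] {G : SimpleGraph V} (hG : IsCactus G)
    {v : V} (c : G.Walk v v) (hc : c.IsCycle) {i : ℕ} (hi : i ≤ c.length) :
    ((repIdx G c (c.getVert i) : ℕ) : ZMod c.length) = (i : ZMod c.length) := by
  have hclen : 0 < c.length := by have := hc.three_le_length; omega
  rcases Nat.lt_or_ge i c.length with hlt | hge
  · rw [repIdx_getVert hG c hc hlt]
  · have hin : i = c.length := le_antisymm hi hge
    subst hin
    have h0 : c.getVert c.length = c.getVert 0 := by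
      rw [Walk.getVert_length, Walk.getVert_zero]
    rw [h0, repIdx_getVert hG c hc hclen, Nat.cast_zero, ZMod.natCast_self]

private lemma adj_step [Fintype V] {G : SimpleGraph V} (hG : IsCactus G)
    {v : V} (c : G.Walk v v) (hc : c.IsCycle) {x y : V} (h : G.Adj x y) :
    ((repIdx G c x : ℕ) : ZMod c.length) = (repIdx G c y : ℕ) ∨
    ((repIdx G c y : ℕ) : ZMod c.length) = (repIdx G c x : ℕ) + 1 ∨
    ((repIdx G c x : ℕ) : ZMod c.length) = (repIdx G c y : ℕ) + 1 := by
  by_cases hec : s(x, y) ∈ c.edges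
  · obtain ⟨i, hi, hei⟩ := Walk.exists_getVert_of_mem_edges c hec
    rcases Sym2.eq_iff.mp hei with ⟨hx', hy'⟩ | ⟨hx', hy'⟩
    · subst hx'; subst hy'
      right; left
      rw [cast_repIdx_getVert hG c hc hi.le, cast_repIdx_getVert hG c hc hi]
      push_cast; ring
    · subst hx'; subst hy'
      right; right
      rw [cast_repIdx_getVert hG c hc hi.le, cast_repIdx_getVert hG c hc hi]
      push_cast; ring
  · have hadj : (G.deleteEdges {e | e ∈ c.edges}).Adj x y := (deleteEdges_adj).mpr ⟨h, hec⟩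
    have hr := (repIdx_spec hG c hc y).2
    have := repIdx_eq hG c hc (repIdx_spec hG c hc y).1 (hadj.reachable.trans hr)
    left; rw [this]

private lemma walk_bound [Fintype V] {G : SimpleGraph V} (hG : IsCactus G)
    {v : V} (c : G.Walk v v) (hc : c.IsCycle) :
    ∀ {x y : V} (p : G.Walk x y), ∃ P M : ℕ, P + M ≤ p.length ∧
      ((repIdx G c y : ℕ) : ZMod c.length) - (repIdx G c x : ℕ) =
        (P : ZMod c.length) - (M : ZMod c.length) := by
  intro x y p
  induction p with
  | nil => exact ⟨0, 0, by simp⟩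
  | @cons x₁ x₂ _ h q ih =>
    obtain ⟨P, M, hPM, hcast⟩ := ih
    rw [Walk.length_cons]
    rcases adj_step hG c hc h with h1 | h1 | h1
    · exact ⟨P, M, by omega, by rw [← h1] at hcast; rw [hcast]⟩
    · refine ⟨P + 1, M, by omega, ?_⟩
      push_cast
      linear_combination hcast + h1
    · refine ⟨P, M + 1, by omega, ?_⟩
      push_cast
      linear_combination hcast - h1

private lemma zmod_min_le {n d P M : ℕ} (hn : 0 < n) (hd : d < n)
    (h : (P : ZMod n) - (M : ZMod n) = (d : ZMod n)) : min d (n - d) ≤ P + M := by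
  have h0 : (((P : ℤ) - (M : ℤ) - (d : ℤ) : ℤ) : ZMod n) = 0 := by
    push_cast
    rw [h]; ring
  have hdvd : (n : ℤ) ∣ ((P : ℤ) - (M : ℤ) - (d : ℤ)) :=
    (ZMod.intCast_zmod_eq_zero_iff_dvd _ _).mp h0
  rcases eq_or_ne ((P : ℤ) - (M : ℤ) - (d : ℤ)) 0 with hz | hz
  · omega
  · rcases lt_or_gt_of_ne hz with hneg | hpos
    · have : (n : ℤ) ≤ -((P : ℤ) - (M : ℤ) - (d : ℤ)) :=
        Int.le_of_dvd (by omega) (dvd_neg.mpr hdvd)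
      omega
    · have : (n : ℤ) ≤ ((P : ℤ) - (M : ℤ) - (d : ℤ)) := Int.le_of_dvd hpos hdvd
      omega

private lemma dist_getVert_le [Fintype V] {G : SimpleGraph V} (hG : IsCactus G)
    {v : V} (c : G.Walk v v) :
    ∀ (k i : ℕ), i + k ≤ c.length → G.dist (c.getVert i) (c.getVert (i + k)) ≤ k := by
  intro k
  induction k with
  | zero => intro i _; simp
  | succ k ih =>
    intro i hik
    have h1 : G.dist (c.getVert i) (c.getVert (i + k)) ≤ k := ih i (by omega)
    have hadj : G.Adj (c.getVert (i + k)) (c.getVert (i + k + 1)) :=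
      c.adj_getVert_succ (by omega)
    have h2 : G.dist (c.getVert (i + k)) (c.getVert (i + (k + 1))) ≤ 1 := by
      rw [show i + (k + 1) = i + k + 1 by omega]
      exact dist_le (Walk.cons hadj Walk.nil)
    calc G.dist (c.getVert i) (c.getVert (i + (k + 1)))
        ≤ G.dist (c.getVert i) (c.getVert (i + k)) +
          G.dist (c.getVert (i + k)) (c.getVert (i + (k + 1))) := hG.1.dist_triangle
      _ ≤ k + 1 := by omega

private lemma dist_getVert_eq [Fintype V] {G : SimpleGraph V} (hG : IsCactus G)
    {v : V} (c : G.Walk v v) (hc : c.IsCycle) {i j : ℕ} (hij : i ≤ j) (hj : j < c.length) :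
    G.dist (c.getVert i) (c.getVert j) = min (j - i) (c.length - (j - i)) := by
  have hclen : 0 < c.length := by have := hc.three_le_length; omega
  have hup1 : G.dist (c.getVert i) (c.getVert j) ≤ j - i := by
    have := dist_getVert_le hG c (j - i) i (by omega)
    rwa [show i + (j - i) = j by omega] at this
  have hup2 : G.dist (c.getVert i) (c.getVert j) ≤ c.length - (j - i) := by
    have ha : G.dist (c.getVert j) (c.getVert c.length) ≤ c.length - j := by
      have := dist_getVert_le hG c (c.length - j) j (by omega)
      rwa [show j + (c.length - j) = c.length by omega] at this
    have hb : G.dist (c.getVert 0) (c.getVert i) ≤ i := by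
      have := dist_getVert_le hG c i 0 (by omega)
      rwa [Nat.zero_add] at this
    have h0 : c.getVert c.length = c.getVert 0 := by
      rw [Walk.getVert_length, Walk.getVert_zero]
    calc G.dist (c.getVert i) (c.getVert j) = G.dist (c.getVert j) (c.getVert i) :=
          dist_comm
      _ ≤ G.dist (c.getVert j) (c.getVert 0) + G.dist (c.getVert 0) (c.getVert i) :=
          hG.1.dist_triangle
      _ = G.dist (c.getVert j) (c.getVert c.length) + G.dist (c.getVert 0) (c.getVert i) := by
          rw [h0]
      _ ≤ (c.length - j) + i := by omega
      _ ≤ c.length - (j - i) := by omega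
  have hlow : min (j - i) (c.length - (j - i)) ≤ G.dist (c.getVert i) (c.getVert j) := by
    obtain ⟨p, hp⟩ := hG.1.exists_walk_length_eq_dist (c.getVert i) (c.getVert j)
    obtain ⟨P, M, hPM, hcast⟩ := walk_bound hG c hc p
    rw [cast_repIdx_getVert hG c hc hj.le, cast_repIdx_getVert hG c hc (by omega : i ≤ c.length)]
      at hcast
    have hd : ((P : ZMod c.length) - (M : ZMod c.length)) = ((j - i : ℕ) : ZMod c.length) := by
      rw [← hcast, Nat.cast_sub hij]
    have := zmod_min_le hclen (by omega : j - i < c.length) hd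
    omega
  omega

end SimpleGraph

namespace SimpleGraph

private lemma rep_mem_support_of_walk [Fintype V] {G : SimpleGraph V} (hG : IsCactus G)
    {v : V} {c : G.Walk v v} (hc : c.IsCycle) {u : V} (hu : u ∈ c.support) :
    ∀ {w x : V} (q : G.Walk w x), x ∈ c.support → x ≠ u →
      (G.deleteEdges {e | e ∈ c.edges}).Reachable w u → u ∈ q.support := by
  intro w x q
  induction q with
  | nil => exact fun hx hxu hr => (cactus_sep hG hc hx hu hxu hr).elim
  | @cons w₁ w₂ _ h q ih =>
    intro hx hxu hr
    rw [Walk.support_cons, List.mem_cons]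
    by_cases hec : s(w₁, w₂) ∈ c.edges
    · have hw₁ : w₁ ∈ c.support := c.fst_mem_support_of_mem_edges hec
      by_cases hww : w₁ = u
      · exact Or.inl hww.symm
      · exact (cactus_sep hG hc hw₁ hu hww hr).elim
    · have hadj : (G.deleteEdges {e | e ∈ c.edges}).Adj w₁ w₂ := (deleteEdges_adj).mpr ⟨h, hec⟩
      exact Or.inr (ih hx hxu (hadj.symm.reachable.trans hr))

private lemma dist_split [Fintype V] {G : SimpleGraph V} (hG : IsCactus G)
    {v : V} {c : G.Walk v v} (hc : c.IsCycle) {w u x : V}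
    (hreach : (G.deleteEdges {e | e ∈ c.edges}).Reachable w u)
    (hu : u ∈ c.support) (hx : x ∈ c.support) (hxu : x ≠ u) :
    G.dist w x = G.dist w u + G.dist u x := by
  have hle : G.dist w x ≤ G.dist w u + G.dist u x := hG.1.dist_triangle
  obtain ⟨p, hp⟩ := hG.1.exists_walk_length_eq_dist w x
  have hmem : u ∈ p.support := rep_mem_support_of_walk hG hc hu p hx hxu hreach
  have h1 : G.dist w u ≤ (p.takeUntil u hmem).length := dist_le _
  have h2 : G.dist u x ≤ (p.dropUntil u hmem).length := dist_le _
  have hsum : (p.takeUntil u hmem).length + (p.dropUntil u hmem).length = p.length := by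
    rw [← Walk.length_append, Walk.take_spec]
  omega

end SimpleGraph

namespace SimpleGraph

private theorem main_helper [Fintype V] (G : SimpleGraph V) (hG : IsCactus G) (a b : V)
    (p : G.Walk a a) (hp : p.IsCycle) (hodd : Odd p.length) (hb : p.getVert 1 = b)
    (t : V) (ht : t ∈ p.support) (htd : G.dist t a = G.dist t b) :
    nclose G a b + nclose G b a =
      Fintype.card V - 2 -
        Nat.card ((G.deleteEdges {e | e ∈ p.edges}).connectedComponentMk t).supp := by
  obtain ⟨k, hk⟩ := hodd
  have hn3 : 3 ≤ p.length := hp.three_le_length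
  have hk1 : 1 ≤ k := by omega
  have ha0 : p.getVert 0 = a := p.getVert_zero
  have hab : G.Adj a b := by
    have := p.adj_getVert_succ (show 0 < p.length by omega)
    rwa [ha0, hb] at this
  have habne : a ≠ b := hab.ne
  have hdistab : G.dist a b = 1 := dist_eq_one_iff_adj.mpr hab
  -- distance formulas
  have hda : ∀ i, i < p.length → G.dist (p.getVert i) a = min i (p.length - i) := by
    intro i hi
    have := dist_getVert_eq hG p hp (Nat.zero_le i) hi
    rw [ha0] at this
    rw [dist_comm, this, Nat.sub_zero]
  have hdb : ∀ i, 1 ≤ i → i < p.length →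
      G.dist (p.getVert i) b = min (i - 1) (p.length - (i - 1)) := by
    intro i h1 hi
    have := dist_getVert_eq hG p hp h1 hi
    rw [hb] at this
    rw [dist_comm, this]
  -- index of t
  obtain ⟨it₀, hgvit₀, hit₀le⟩ := Walk.mem_support_iff_exists_getVert.mp ht
  have hex : ∃ it, it < p.length ∧ p.getVert it = t := by
    rcases Nat.lt_or_ge it₀ p.length with h | h
    · exact ⟨it₀, h, hgvit₀⟩
    · refine ⟨0, by omega, ?_⟩
      rw [← hgvit₀, Walk.getVert_zero, Walk.getVert_of_length_le p h]
  obtain ⟨it, hitlt, hgvit⟩ := hex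
  -- t is the midpoint
  have hitne : it ≠ 0 := by
    intro h0
    rw [h0, ha0] at hgvit
    rw [← hgvit] at htd
    rw [dist_self, hdistab] at htd
    omega
  have hit : it = k + 1 := by
    have h1 : G.dist t a = min it (p.length - it) := by rw [← hgvit]; exact hda it hitlt
    have h2 : G.dist t b = min (it - 1) (p.length - (it - 1)) := by
      rw [← hgvit]; exact hdb it (by omega) hitlt
    rw [h1, h2] at htd
    omega
  have htv : t = p.getVert (k + 1) := by rw [← hgvit, hit]
  -- basic reps
  have hrepa : repIdx G p a = 0 := by
    have := repIdx_getVert hG p hp (show 0 < p.length by omega)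
    rwa [ha0] at this
  have hrepb : repIdx G p b = 1 := by
    rw [← hb]; exact repIdx_getVert hG p hp (by omega)
  -- classification
  have claim1 : ∀ w : V, repIdx G p w = k + 1 → G.dist w a = G.dist w b := by
    intro w hw
    have hspec := repIdx_spec hG p hp w
    rw [hw] at hspec
    have hune_a : a ≠ p.getVert (k + 1) := by
      intro h
      have h' : p.getVert 0 = p.getVert (k + 1) := by rw [ha0]; exact h
      have := hp.getVert_inj (show 0 < p.length by omega) (show k + 1 < p.length by omega) h'
      omega
    have hune_b : b ≠ p.getVert (k + 1) := by
      intro h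
      rw [← hb] at h
      have := hp.getVert_inj (show 1 < p.length by omega) (show k + 1 < p.length by omega) h
      omega
    have hmemk : p.getVert (k + 1) ∈ p.support :=
      Walk.mem_support_iff_exists_getVert.mpr ⟨k + 1, rfl, by omega⟩
    have hsa := dist_split hG hp hspec.2 hmemk (Walk.start_mem_support p) hune_a
    have hsb := dist_split hG hp hspec.2 hmemk
      (Walk.mem_support_iff_exists_getVert.mpr ⟨1, hb, by omega⟩) hune_b
    rw [hsa, hsb, hda (k + 1) (by omega), hdb (k + 1) (by omega) (by omega)]
    congr 1
    omega
  have claim2 : ∀ w : V, repIdx G p w ≠ k + 1 → G.dist w a ≠ G.dist w b := by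
    intro w hw
    have hspec := repIdx_spec hG p hp w
    set i := repIdx G p w with hidef
    rcases Nat.eq_zero_or_pos i with hi0 | hipos
    · -- u = a
      have hua : p.getVert i = a := by rw [hi0, ha0]
      have hmema : a ∈ p.support := Walk.start_mem_support p
      have hbne : b ≠ a := habne.symm
      have := dist_split hG hp (hua ▸ hspec.2) hmema
        (Walk.mem_support_iff_exists_getVert.mpr ⟨1, hb, by omega⟩) hbne
      rw [this, hdistab]
      omega
    rcases Nat.lt_or_ge i 2 with hi1 | hi2
    · -- i = 1, u = b
      have hi1' : i = 1 := by omega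
      have hub : p.getVert i = b := by rw [hi1', hb]
      have hmemb : b ∈ p.support := Walk.mem_support_iff_exists_getVert.mpr ⟨1, hb, by omega⟩
      have := dist_split hG hp (hub ▸ hspec.2) hmemb (Walk.start_mem_support p) habne
      have hba : G.dist b a = 1 := by rw [dist_comm]; exact hdistab
      rw [this, hba]
      omega
    · -- generic
      have hune_a : a ≠ p.getVert i := by
        intro h
        have h' : p.getVert 0 = p.getVert i := by rw [ha0]; exact h
        have := hp.getVert_inj (show 0 < p.length by omega) hspec.1 h'
        omega
      have hune_b : b ≠ p.getVert i := by
        intro h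
        rw [← hb] at h
        have := hp.getVert_inj (show 1 < p.length by omega) hspec.1 h
        omega
      have hmemi : p.getVert i ∈ p.support :=
        Walk.mem_support_iff_exists_getVert.mpr ⟨i, rfl, hspec.1.le⟩
      have hsa := dist_split hG hp hspec.2 hmemi (Walk.start_mem_support p) hune_a
      have hsb := dist_split hG hp hspec.2 hmemi
        (Walk.mem_support_iff_exists_getVert.mpr ⟨1, hb, by omega⟩) hune_b
      rw [hsa, hsb, hda i hspec.1, hdb i (by omega) hspec.1]
      have hilt := hspec.1
      omega
  -- the component of t
  set S : Set V := ((G.deleteEdges {e | e ∈ p.edges}).connectedComponentMk t).supp with hSdef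
  have hSmem : ∀ w, w ∈ S ↔ repIdx G p w = k + 1 := by
    intro w
    rw [hSdef, ConnectedComponent.mem_supp_iff, ConnectedComponent.eq]
    constructor
    · intro hr
      exact repIdx_eq hG p hp (by omega) (htv ▸ hr)
    · intro hr
      have := (repIdx_spec hG p hp w).2
      rw [hr] at this
      exact htv ▸ this
  -- the three sets
  set L : Set V := {w : V | w ≠ a ∧ w ≠ b ∧ G.dist w a < G.dist w b} with hLdef
  set R : Set V := {w : V | w ≠ b ∧ w ≠ a ∧ G.dist w b < G.dist w a} with hRdef
  have hSeq : S = {w : V | w ≠ a ∧ w ≠ b ∧ G.dist w a = G.dist w b} := by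
    ext w
    rw [hSmem w]
    constructor
    · intro hr
      refine ⟨?_, ?_, claim1 w hr⟩
      · intro h; rw [h, hrepa] at hr; omega
      · intro h; rw [h, hrepb] at hr; omega
    · rintro ⟨-, -, hd⟩
      by_contra hne
      exact claim2 w hne hd
  -- counting
  have hLcard : nclose G a b = L.ncard := by rw [nclose, hLdef, Nat.card_coe_set_eq]
  have hRcard : nclose G b a = R.ncard := by rw [nclose, hRdef, Nat.card_coe_set_eq]
  have hScard : Nat.card S = S.ncard := Nat.card_coe_set_eq S
  have hdisjLR : Disjoint L R := by
    rw [Set.disjoint_left]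
    rintro w ⟨-, -, h1⟩ ⟨-, -, h2⟩
    omega
  have hdisjLRS : Disjoint (L ∪ R) S := by
    rw [Set.disjoint_left]
    rintro w hw hws
    rw [hSeq] at hws
    obtain ⟨-, -, heq⟩ := hws
    rcases hw with ⟨-, -, h1⟩ | ⟨-, -, h2⟩ <;> omega
  have hunion : L ∪ R ∪ S = {a, b}ᶜ := by
    ext w
    simp only [Set.mem_union, Set.mem_compl_iff, Set.mem_insert_iff, Set.mem_singleton_iff,
      not_or, hLdef, hRdef, Set.mem_setOf_eq]
    rw [hSeq]
    simp only [Set.mem_setOf_eq]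
    constructor
    · rintro ((⟨h1, h2, -⟩ | ⟨h1, h2, -⟩) | ⟨h1, h2, -⟩) <;> exact ⟨by tauto, by tauto⟩
    · rintro ⟨h1, h2⟩
      rcases Nat.lt_trichotomy (G.dist w a) (G.dist w b) with h | h | h
      · exact Or.inl (Or.inl ⟨h1, h2, h⟩)
      · exact Or.inr ⟨h1, h2, h⟩
      · exact Or.inl (Or.inr ⟨h2, h1, h⟩)
  have hcompl : ({a, b}ᶜ : Set V).ncard + 2 = Fintype.card V := by
    have h2 : ({a, b} : Set V).ncard = 2 := Set.ncard_pair habne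
    have := Set.ncard_add_ncard_compl ({a, b} : Set V)
    rw [h2, Nat.card_eq_fintype_card] at this
    omega
  have hu1 : (L ∪ R ∪ S).ncard = (L ∪ R).ncard + S.ncard :=
    Set.ncard_union_eq hdisjLRS (Set.toFinite _) (Set.toFinite _)
  have hu2 : (L ∪ R).ncard = L.ncard + R.ncard :=
    Set.ncard_union_eq hdisjLR (Set.toFinite _) (Set.toFinite _)
  rw [hLcard, hRcard, hScard]
  rw [hunion] at hu1
  omega

end SimpleGraph

namespace SimpleGraph

private lemma length_rotate {G : SimpleGraph V} {v x : V} (c : G.Walk v v)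
    (hx : x ∈ c.support) : (c.rotate x hx).length = c.length := by
  rw [Walk.rotate, Walk.length_append, Nat.add_comm, ← Walk.length_append, Walk.take_spec]

private lemma isCycle_reverse {G : SimpleGraph V} {v : V} {c : G.Walk v v}
    (hc : c.IsCycle) : c.reverse.IsCycle := by
  have hn3 := hc.three_le_length
  refine ⟨⟨⟨?_⟩, ?_⟩, ?_⟩
  · rw [Walk.edges_reverse]
    exact List.nodup_reverse.mpr hc.isTrail.edges_nodup
  · intro h
    have := congrArg Walk.length h
    rw [Walk.length_reverse] at this
    simp only [Walk.length_nil] at this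
    omega
  · rw [Walk.cycle_tail_eq]
    refine (List.nodup_map_iff_inj_on List.nodup_range).mpr ?_
    intro k₁ hk₁ k₂ hk₂ hf
    rw [List.mem_range] at hk₁ hk₂
    rw [Walk.length_reverse] at hk₁ hk₂
    rw [Walk.getVert_reverse, Walk.getVert_reverse] at hf
    have := hc.getVert_inj
      (show c.length - (k₁ + 1) < c.length by omega)
      (show c.length - (k₂ + 1) < c.length by omega) hf
    omega

end SimpleGraph


theorem stmt_10 [Fintype V] (G : SimpleGraph V) (hG : IsCactus G)
    (v : V) (c : G.Walk v v) (hc : c.IsCycle) (hodd : Odd c.length)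
    (a b : V) (he : s(a, b) ∈ c.edges)
    (t : V) (ht : t ∈ c.support) (htd : G.dist t a = G.dist t b) :
    nclose G a b + nclose G b a =
      Fintype.card V - 2 -
        Nat.card ((G.deleteEdges {e | e ∈ c.edges}).connectedComponentMk t).supp := by
  have hn3 := hc.three_le_length
  have ha : a ∈ c.support := c.fst_mem_support_of_mem_edges he
  set c₁ : G.Walk a a := c.rotate a ha with hc₁def
  have hc₁ : c₁.IsCycle := hc.rotate ha
  have hlen₁ : c₁.length = c.length := length_rotate c ha
  have hedges₁ : ∀ e, e ∈ c₁.edges ↔ e ∈ c.edges := fun e => Walk.mem_edges_rotate_iff c ha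
  have hsup₁ : ∀ z, z ∈ c₁.support ↔ z ∈ c.support :=
    fun z => Walk.mem_support_rotate_iff' c (by omega) ha
  have he₁ : s(a, b) ∈ c₁.edges := (hedges₁ _).mpr he
  obtain ⟨i, hi, hei⟩ := Walk.exists_getVert_of_mem_edges c₁ he₁
  have ha₁0 : c₁.getVert 0 = a := c₁.getVert_zero
  rcases Sym2.eq_iff.mp hei with ⟨hx', hy'⟩ | ⟨hx', hy'⟩
  · -- a = getVert i, so i = 0 and b = getVert 1
    have hi0 : i = 0 := by
      have h' : c₁.getVert i = c₁.getVert 0 := by rw [ha₁0]; exact hx'.symm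
      exact hc₁.getVert_inj hi (by omega) h'
    have hb1 : c₁.getVert 1 = b := by subst hi0; exact hy'.symm
    have := main_helper G hG a b c₁ hc₁ (by rw [hlen₁]; exact hodd) hb1 t
      ((hsup₁ t).mpr ht) htd
    have hseteq : {e | e ∈ c₁.edges} = {e | e ∈ c.edges} := Set.ext fun e => hedges₁ e
    rwa [hseteq] at this
  · -- a = getVert (i+1), so i+1 = length and b = getVert (length - 1)
    have hi1 : i + 1 = c₁.length := by
      by_contra hne
      have hlt : i + 1 < c₁.length := by omega
      have h' : c₁.getVert (i + 1) = c₁.getVert 0 := by rw [ha₁0]; exact hx'.symm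
      have := hc₁.getVert_inj hlt (by omega) h'
      omega
    set p : G.Walk a a := c₁.reverse with hpdef
    have hpc : p.IsCycle := isCycle_reverse hc₁
    have hplen : p.length = c.length := by rw [hpdef, Walk.length_reverse, hlen₁]
    have hpb : p.getVert 1 = b := by
      rw [hpdef, Walk.getVert_reverse, hy']
      congr 1
      omega
    have hpedges : ∀ e, e ∈ p.edges ↔ e ∈ c.edges := by
      intro e
      rw [hpdef, Walk.edges_reverse, List.mem_reverse]
      exact hedges₁ e
    have hpsup : t ∈ p.support := by
      rw [hpdef, Walk.support_reverse, List.mem_reverse]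
      exact (hsup₁ t).mpr ht
    have := main_helper G hG a b p hpc (by rw [hplen]; exact hodd) hpb t hpsup htd
    have hseteq : {e | e ∈ p.edges} = {e | e ∈ c.edges} := Set.ext fun e => hpedges e
    rwa [hseteq] at this
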